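/- Let X be a complex Hilbert space, A self-adjoint on X with (−Au,u) ≥ C_A‖u‖² for u ∈ D(A), Λ closed and A-compact, N = ker Λ closed, Q the orthogonal projection onto N^⊥ with QA ⊂ AQ, and B₂ a bounded self-adjoint operator on X with ker B₂ = N, (u, B₂u) ≥ C‖u‖² for u ∈ N^⊥, Re(−Au, B₂u) ≥ C‖(−A)^{1/2}u‖² for u ∈ D(A) ∩ N^⊥, and Im(Λu, B₂u) = 0 for u ∈ D(Λ). Then for every α ∈ ℝ, the spectrum of L_α = A − iαΛ is contained in the open left half-plane {ζ ∈ ℂ : Re ζ < 0}; in particular {Re ζ ≥ 0} ⊂ ρ(L_α). -/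

import Mathlib

open Filter

variable {X : Type*} [NormedAddCommGroup X] [InnerProductSpace ℂ X] [CompleteSpace X]

/-- `Λ` is `A`-compact: `D(A) ⊆ D(Λ)` and for every sequence `(u_k) ⊆ D(A)` with
`‖u_k‖ + ‖A u_k‖` bounded, `(Λ u_k)` has a convergent subsequence. -/
def IsRelCompact (A Λ : X →ₗ.[ℂ] X) (h : A.domain ≤ Λ.domain) : Prop :=
  ∀ u : ℕ → A.domain, (∃ M : ℝ, ∀ k, ‖(u k : X)‖ + ‖A (u k)‖ ≤ M) →
    ∃ φ : ℕ → ℕ, StrictMono φ ∧ ∃ l : X,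
      Tendsto (fun k => Λ ⟨(u (φ k) : X), h (u (φ k)).2⟩) atTop (nhds l)

/-- The operator `L_α = A − iαΛ` with domain `D(A)`. -/
noncomputable def pmapL (A Λ : X →ₗ.[ℂ] X) (h : A.domain ≤ Λ.domain) (α : ℝ) :
    X →ₗ.[ℂ] X :=
  ⟨A.domain, A.toFun - (Complex.I * (α : ℂ)) • (Λ.toFun.comp (Submodule.inclusion h))⟩

/-- `ζ` belongs to the resolvent set of the operator `T`: `ζ − T : D(T) → X` is
bijective with bounded inverse. -/
def InResolvent (T : X →ₗ.[ℂ] X) (ζ : ℂ) : Prop :=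
  ∃ R : X →L[ℂ] X, (∀ u : T.domain, R (ζ • (u : X) - T u) = u) ∧
    ∀ f : X, ∃ h : R f ∈ T.domain, ζ • R f - T ⟨R f, h⟩ = f

local notation "⟪" x ", " y "⟫" => @inner ℂ _ _ x y

private lemma exists_orth_unit {U V : Submodule ℂ X} (hVc : IsClosed (V : Set X))
    (hUV : V ≤ U) (hne : ∃ x, x ∈ U ∧ x ∉ V) :
    ∃ x : X, x ∈ U ∧ x ∈ Vᗮ ∧ ‖x‖ = 1 := by
  obtain ⟨z, hzU, hzV⟩ := hne
  haveI : CompleteSpace V := hVc.completeSpace_coe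
  set y := z - (V.orthogonalProjectionOnto z : X) with hy
  have hyV' : y ∈ Vᗮ := V.sub_starProjection_mem_orthogonal z
  have hyU : y ∈ U := Submodule.sub_mem _ hzU (hUV (V.orthogonalProjectionOnto z).2)
  have hy0 : y ≠ 0 := by
    intro h
    apply hzV
    have : z = (V.orthogonalProjectionOnto z : X) := by rwa [sub_eq_zero] at h
    rw [this]; exact (V.orthogonalProjectionOnto z).2
  refine ⟨(‖y‖⁻¹ : ℂ) • y, Submodule.smul_mem _ _ hyU, Submodule.smul_mem _ _ hyV', ?_⟩
  rw [norm_smul]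
  simp [norm_ne_zero_iff.mpr hy0, inv_mul_cancel₀ (norm_ne_zero_iff.mpr hy0)]

private lemma fredholm (K : X →L[ℂ] X)
    (hKc : ∀ f : ℕ → X, (∃ M : ℝ, ∀ n, ‖f n‖ ≤ M) →
      ∃ φ : ℕ → ℕ, StrictMono φ ∧ ∃ l : X, Tendsto (fun n => K (f (φ n))) atTop (nhds l))
    (hinj : ∀ u : X, u + K u = 0 → u = 0) :
    ∃ S : X →L[ℂ] X, (∀ u, S (u + K u) = u) ∧ ∀ f, S f + K (S f) = f := by
  set T : X →L[ℂ] X := 1 + K with hT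
  have hTapp : ∀ u, T u = u + K u := fun u => rfl
  -- bounded below
  have hbb : ∃ c : ℝ, 0 < c ∧ ∀ u, c * ‖u‖ ≤ ‖T u‖ := by
    by_contra hcon
    push_neg at hcon
    have hex : ∀ n : ℕ, ∃ u : X, ‖u‖ = 1 ∧ ‖T u‖ < ((n : ℝ) + 1)⁻¹ := by
      intro n
      obtain ⟨u, hu⟩ := hcon ((n : ℝ) + 1)⁻¹ (by positivity)
      have hu0 : u ≠ 0 := by
        rintro rfl
        simp at hu
      refine ⟨(‖u‖⁻¹ : ℂ) • u, ?_, ?_⟩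
      · rw [norm_smul]; simp [inv_mul_cancel₀ (norm_ne_zero_iff.mpr hu0)]
      · rw [map_smul, norm_smul]
        simp only [norm_inv, Complex.norm_real, norm_norm]
        calc ‖u‖⁻¹ * ‖T u‖ < ‖u‖⁻¹ * (((n:ℝ)+1)⁻¹ * ‖u‖) := by
              apply mul_lt_mul_of_pos_left hu
              exact inv_pos.mpr (norm_pos_iff.mpr hu0)
          _ = ((n:ℝ)+1)⁻¹ := by
              rw [mul_comm ((n:ℝ)+1)⁻¹, inv_mul_cancel_left₀ (norm_ne_zero_iff.mpr hu0)]
    choose z hz1 hz2 using hex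
    obtain ⟨φ, hφ, l, hl⟩ := hKc z ⟨1, fun n => le_of_eq (hz1 n)⟩
    have hTz : Tendsto (fun n => T (z (φ n))) atTop (nhds 0) := by
      rw [tendsto_iff_norm_sub_tendsto_zero]
      simp only [sub_zero]
      apply squeeze_zero (fun n => norm_nonneg _) (fun n => (hz2 (φ n)).le.trans ?_)
      · exact tendsto_one_div_add_atTop_nhds_zero_nat.congr (by intro n; rw [one_div])
      · apply inv_anti₀ (by positivity)
        have : (n:ℝ) ≤ φ n := by exact_mod_cast hφ.le_apply
        linarith
    have hzt : Tendsto (fun n => z (φ n)) atTop (nhds (-l)) := by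
      have : (fun n => z (φ n)) = fun n => T (z (φ n)) - K (z (φ n)) := by
        funext n; rw [hTapp]; rw [add_sub_cancel_right]
      rw [this]
      simpa using hTz.sub hl
    have hnorm : ‖(-l)‖ = 1 := by
      have := (continuous_norm.tendsto _).comp hzt
      have h2 : Tendsto (fun n => ‖z (φ n)‖) atTop (nhds 1) := by
        simp only [hz1]; exact tendsto_const_nhds
      exact tendsto_nhds_unique this h2
    have hKl : K (-l) = l := by
      have h1 : Tendsto (fun n => K (z (φ n))) atTop (nhds (K (-l))) :=
        (K.continuous.tendsto _).comp hzt
      exact tendsto_nhds_unique h1 hl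
    have : (-l) = 0 := hinj _ (by rw [hKl, neg_add_cancel])
    rw [this] at hnorm
    simp at hnorm
  obtain ⟨c, hc0, hc⟩ := hbb
  have hTinj : Function.Injective T := by
    intro a b hab
    have : T (a - b) = 0 := by rw [map_sub, hab, sub_self]
    have h2 := hc (a - b)
    rw [this, norm_zero] at h2
    have h3 : ‖a - b‖ ≤ 0 := by nlinarith [norm_nonneg (a - b)]
    have h4 := le_antisymm h3 (norm_nonneg _)
    rwa [norm_eq_zero, sub_eq_zero] at h4
  -- powers of T bounded below
  have hTn : ∀ (n : ℕ) (u : X), c ^ n * ‖u‖ ≤ ‖(T ^ n) u‖ := by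
    intro n
    induction n with
    | zero => intro u; simp
    | succ n ih =>
      intro u
      have h1 : (T ^ (n + 1)) u = (T ^ n) (T u) := by
        rw [pow_succ]; rfl
      rw [h1, pow_succ]
      calc c ^ n * c * ‖u‖ = c ^ n * (c * ‖u‖) := by ring
        _ ≤ c ^ n * ‖T u‖ := by
            apply mul_le_mul_of_nonneg_left (hc u) (by positivity)
        _ ≤ ‖(T ^ n) (T u)‖ := ih (T u)
  have hTninj : ∀ (n : ℕ), Function.Injective (T ^ n) := by
    intro n a b hab
    have : (T ^ n) (a - b) = 0 := by rw [map_sub, hab, sub_self]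
    have h2 := hTn n (a - b)
    rw [this, norm_zero] at h2
    have h3 : ‖a - b‖ ≤ 0 := by nlinarith [norm_nonneg (a - b), pow_pos hc0 n]
    have h4 := le_antisymm h3 (norm_nonneg _)
    rwa [norm_eq_zero, sub_eq_zero] at h4
  -- ranges
  set Rn : ℕ → Submodule ℂ X := fun n => LinearMap.range ((T ^ n : X →L[ℂ] X) : X →ₗ[ℂ] X)
    with hRn
  have hRclosed : ∀ n, IsClosed ((Rn n : Submodule ℂ X) : Set X) := by
    intro n
    have halip : AntilipschitzWith (⟨c ^ n, (pow_pos hc0 n).le⟩ : NNReal)⁻¹ (T ^ n) := by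
      apply ContinuousLinearMap.antilipschitz_of_bound
      intro x
      have := hTn n x
      change ‖x‖ ≤ (c ^ n)⁻¹ * ‖(T ^ n) x‖
      rw [le_inv_mul_iff₀ (pow_pos hc0 n)]
      exact this
    have := halip.isClosed_range (T ^ n).uniformContinuous
    simpa [hRn, LinearMap.coe_range, Module.End.coe_pow] using this
  have hRsucc : ∀ n, Rn (n + 1) ≤ Rn n := by
    intro n x hx
    obtain ⟨y, rfl⟩ := hx
    refine ⟨T y, ?_⟩
    show (T ^ n) (T y) = (T ^ (n + 1)) y
    rw [pow_succ]; rfl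
  have hRmono : ∀ {m n : ℕ}, n ≤ m → Rn m ≤ Rn n := by
    intro m n h
    induction h with
    | refl => exact le_rfl
    | step h ih => exact le_trans (hRsucc _) ih
  have hTmaps : ∀ n (x : X), x ∈ Rn n → T x ∈ Rn (n + 1) := by
    intro n x hx
    obtain ⟨y, rfl⟩ := hx
    refine ⟨y, ?_⟩
    show (T ^ (n + 1)) y = T ((T ^ n) y)
    rw [pow_succ']; rfl
  -- surjectivity
  have hsurj : Function.Surjective T := by
    by_contra hns
    simp only [Function.Surjective, not_forall, not_exists] at hns
    obtain ⟨y, hy⟩ := hns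
    have hstrict : ∀ n, ∃ x, x ∈ Rn n ∧ x ∉ Rn (n + 1) := by
      intro n
      refine ⟨(T ^ n) y, ⟨y, rfl⟩, ?_⟩
      rintro ⟨x, hx⟩
      have hx' : (T ^ n) (T x) = (T ^ n) y := by
        rw [← hx, pow_succ]; rfl
      exact hy x (hTninj n hx')
    have hsel : ∀ n : ℕ, ∃ x : X, x ∈ Rn n ∧ x ∈ (Rn (n + 1))ᗮ ∧ ‖x‖ = 1 := by
      intro n
      apply exists_orth_unit (hRclosed (n + 1)) (hRsucc n)
      obtain ⟨x, h1, h2⟩ := hstrict n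
      exact ⟨x, h1, h2⟩
    choose x hx1 hx2 hx3 using hsel
    have hsep : ∀ {n m : ℕ}, n < m → 1 ≤ ‖K (x n) - K (x m)‖ := by
      intro n m hnm
      have hKx : ∀ k, K (x k) = T (x k) - x k := by
        intro k; rw [hTapp]; abel
      have hdiff : K (x n) - K (x m) = (T (x n) - T (x m) + x m) - x n := by
        rw [hKx, hKx]; abel
      set w := T (x n) - T (x m) + x m with hw
      have hwmem : w ∈ Rn (n + 1) := by
        apply Submodule.add_mem
        · apply Submodule.sub_mem
          · exact hTmaps n _ (hx1 n)
          · exact hRmono (Nat.succ_le_of_lt (Nat.lt_succ_of_lt hnm)) (hTmaps m _ (hx1 m))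
        · exact hRmono (Nat.succ_le_of_lt hnm) (hx1 m)
      have hinner : ⟪w, x n⟫ = 0 := (Submodule.mem_orthogonal _ _).mp (hx2 n) w hwmem
      have hns : ‖w - x n‖ ^ 2 = ‖w‖ ^ 2 + ‖x n‖ ^ 2 := by
        rw [norm_sub_sq (𝕜 := ℂ), hinner]
        simp
      have : 1 ≤ ‖w - x n‖ ^ 2 := by
        rw [hns, hx3 n]
        nlinarith [sq_nonneg ‖w‖]
      rw [hdiff]
      nlinarith [norm_nonneg (w - x n)]
    obtain ⟨φ, hφ, l, hl⟩ := hKc x ⟨1, fun n => le_of_eq (hx3 n)⟩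
    have hdiffto : Tendsto (fun n => K (x (φ (n + 1))) - K (x (φ n))) atTop (nhds 0) := by
      have := (hl.comp (tendsto_add_atTop_nat 1)).sub hl
      simpa using this
    have hev := (hdiffto.eventually (Metric.ball_mem_nhds (0 : X) one_pos)).exists
    obtain ⟨n, hn⟩ := hev
    rw [dist_zero_right] at hn
    have h1 : 1 ≤ ‖K (x (φ n)) - K (x (φ (n + 1)))‖ := hsep (hφ (Nat.lt_succ_self n))
    rw [← norm_neg] at hn
    simp only [neg_sub] at hn
    linarith
  -- build inverse
  have hker : LinearMap.ker (T : X →ₗ[ℂ] X) = ⊥ := LinearMap.ker_eq_bot_of_injective (f := (T : X →ₗ[ℂ] X)) hTinj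
  have hrange : LinearMap.range (T : X →ₗ[ℂ] X) = ⊤ := LinearMap.range_eq_top.mpr hsurj
  let e := ContinuousLinearEquiv.ofBijective T hker hrange
  refine ⟨(e.symm : X →L[ℂ] X), ?_, ?_⟩
  · intro u
    have : T u = u + K u := hTapp u
    rw [← this]
    exact e.symm_apply_apply u
  · intro f
    have h1 : T (e.symm f) = f := e.apply_symm_apply f
    rw [← hTapp]
    exact h1

private lemma pmap_congr {F G : X →ₗ.[ℂ] X} (h : F = G) (x : X) (hx : x ∈ F.domain)
    (hx' : x ∈ G.domain) : F ⟨x, hx⟩ = G ⟨x, hx'⟩ := by subst h; rfl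

private lemma selfadj_resolvent (A : X →ₗ.[ℂ] X) (hA : IsSelfAdjoint A)
    (C_A : ℝ) (hCA : 0 < C_A)
    (hcoer : ∀ u : A.domain, C_A * ‖(u : X)‖ ^ 2 ≤ (inner ℂ (-(A u)) ((u : X)) : ℂ).re)
    (ζ : ℂ) (hζ : 0 ≤ ζ.re) :
    ∃ R : X →L[ℂ] X, (∀ u : A.domain, R (ζ • (u : X) - A u) = (u : X)) ∧
      ∀ f : X, ∃ h : R f ∈ A.domain, ζ • R f - A ⟨R f, h⟩ = f := by
  have hA' : A.adjoint = A := hA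
  have densA : Dense (A.domain : Set X) := hA.dense_domain
  have symm : ∀ (x y : A.domain), ⟪A x, (y : X)⟫ = ⟪(x : X), A y⟫ := by
    have h := LinearPMap.adjoint_isFormalAdjoint (T := A) densA
    rw [hA'] at h
    exact h
  set g : A.domain →ₗ[ℂ] X := ζ • A.domain.subtype - A.toFun with hg
  have hgapp : ∀ u : A.domain, g u = ζ • (u : X) - A u := fun u => rfl
  have hkey : ∀ u : A.domain, C_A * ‖(u : X)‖ ^ 2 ≤ (⟪g u, (u : X)⟫).re := by
    intro u
    have h1 : ⟪g u, (u : X)⟫ = (starRingEnd ℂ) ζ * ⟪(u : X), (u : X)⟫ - ⟪A u, (u : X)⟫ := by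
      rw [hgapp, inner_sub_left, inner_smul_left]
    have h2 : ((starRingEnd ℂ) ζ * ⟪(u : X), (u : X)⟫).re = ζ.re * ‖(u : X)‖ ^ 2 := by
      rw [inner_self_eq_norm_sq_to_K]
      simp [Complex.mul_re, ← Complex.ofReal_pow]
    rw [h1, Complex.sub_re, h2]
    have h4 := hcoer u
    rw [inner_neg_left, Complex.neg_re] at h4
    nlinarith [mul_nonneg hζ (sq_nonneg ‖(u : X)‖)]
  have hbound : ∀ u : A.domain, C_A * ‖(u : X)‖ ≤ ‖g u‖ := by
    intro u
    rcases eq_or_ne ‖(u : X)‖ 0 with h | h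
    · rw [h, mul_zero]; exact norm_nonneg _
    · have h1 := hkey u
      have h2 : (⟪g u, (u : X)⟫).re ≤ ‖g u‖ * ‖(u : X)‖ := by
        calc (⟪g u, (u : X)⟫).re ≤ ‖⟪g u, (u : X)⟫‖ := Complex.re_le_norm _
          _ ≤ ‖g u‖ * ‖(u : X)‖ := norm_inner_le_norm _ _
      have hpos : 0 < ‖(u : X)‖ := lt_of_le_of_ne (norm_nonneg _) (Ne.symm h)
      nlinarith
  have hginj : Function.Injective g := by
    intro a b hab
    have h1 : g (a - b) = 0 := by rw [map_sub, hab, sub_self]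
    have h2 := hbound (a - b)
    rw [h1, norm_zero] at h2
    have h3 : ‖((a - b : A.domain) : X)‖ ≤ 0 := by nlinarith [norm_nonneg ((a - b : A.domain) : X)]
    have h4 := le_antisymm h3 (norm_nonneg _)
    rw [norm_eq_zero] at h4
    have h5 : (a : X) - (b : X) = 0 := by exact_mod_cast h4
    exact Subtype.ext (by rwa [sub_eq_zero] at h5)
  -- range is closed
  have hclosed : IsClosed ((LinearMap.range g : Submodule ℂ X) : Set X) := by
    apply IsSeqClosed.isClosed
    intro f p hmem htend
    choose u hu using fun n => LinearMap.mem_range.mp (hmem n)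
    have hcauchy : CauchySeq (fun n => ((u n : X))) := by
      rw [Metric.cauchySeq_iff]
      intro ε hε
      have hfC : CauchySeq f := htend.cauchySeq
      rw [Metric.cauchySeq_iff] at hfC
      obtain ⟨N, hN⟩ := hfC (C_A * ε) (by positivity)
      refine ⟨N, fun m hm n hn => ?_⟩
      have h1 := hbound (u m - u n)
      have h2 : g (u m - u n) = f m - f n := by rw [map_sub, hu, hu]
      rw [h2] at h1
      have h3 := hN m hm n hn
      rw [dist_eq_norm] at h3 ⊢
      have h4 : ‖(u m : X) - (u n : X)‖ = ‖((u m - u n : A.domain) : X)‖ := by norm_cast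
      rw [h4]
      nlinarith [norm_nonneg ((u m - u n : A.domain) : X)]
    obtain ⟨x, hx⟩ := cauchySeq_tendsto_of_complete hcauchy
    have hAtend : Tendsto (fun n => A (u n)) atTop (nhds (ζ • x - p)) := by
      have h1 : ∀ n, A (u n) = ζ • ((u n : X)) - f n := by
        intro n; rw [← hu n, hgapp]; abel
      simp only [h1]
      exact (hx.const_smul ζ).sub htend
    have hw : ∀ v : A.domain, ⟪ζ • x - p, (v : X)⟫ = ⟪x, A v⟫ := by
      intro v
      have h1 : Tendsto (fun n => ⟪((u n : X)), A v⟫) atTop (nhds ⟪x, A v⟫) :=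
        hx.inner tendsto_const_nhds
      have h2 : Tendsto (fun n => ⟪((u n : X)), A v⟫) atTop (nhds ⟪ζ • x - p, (v : X)⟫) := by
        have h3 : (fun n => ⟪((u n : X)), A v⟫) = fun n => ⟪A (u n), (v : X)⟫ := by
          funext n; rw [symm]
        rw [h3]
        exact hAtend.inner tendsto_const_nhds
      exact tendsto_nhds_unique h2 h1
    have hxdom : x ∈ A.adjoint.domain :=
      LinearPMap.mem_adjoint_domain_of_exists _ ⟨ζ • x - p, hw⟩
    have hAx : A.adjoint ⟨x, hxdom⟩ = ζ • x - p := LinearPMap.adjoint_apply_eq densA _ hw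
    have hxdom' : x ∈ A.domain := by rw [← hA']; exact hxdom
    have hAx' : A ⟨x, hxdom'⟩ = ζ • x - p := by
      rw [← pmap_congr hA' x hxdom hxdom']; exact hAx
    refine LinearMap.mem_range.mpr ⟨⟨x, hxdom'⟩, ?_⟩
    rw [hgapp]
    change ζ • x - A ⟨x, hxdom'⟩ = p
    rw [hAx']; abel
  -- range is dense
  haveI : CompleteSpace (LinearMap.range g : Submodule ℂ X) := hclosed.completeSpace_coe
  have hdense : (LinearMap.range g : Submodule ℂ X) = ⊤ := by
    rw [← Submodule.orthogonal_eq_bot_iff]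
    rw [Submodule.eq_bot_iff]
    intro x hx
    have hx' : ∀ v : A.domain, ⟪g v, x⟫ = 0 := by
      intro v
      exact (Submodule.mem_orthogonal _ _).mp hx _ (LinearMap.mem_range.mpr ⟨v, rfl⟩)
    have hw : ∀ v : A.domain, ⟪(starRingEnd ℂ) ζ • x, (v : X)⟫ = ⟪x, A v⟫ := by
      intro v
      have h1 := hx' v
      rw [hgapp, inner_sub_left, inner_smul_left, sub_eq_zero] at h1
      have h2 : ⟪x, A v⟫ = ζ * ⟪x, (v : X)⟫ := by
        have := congrArg (starRingEnd ℂ) h1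
        rw [inner_conj_symm, map_mul, inner_conj_symm] at this
        rw [← this]
        simp
      rw [h2, inner_smul_left]
      simp
    have hxdom : x ∈ A.adjoint.domain :=
      LinearPMap.mem_adjoint_domain_of_exists _ ⟨(starRingEnd ℂ) ζ • x, hw⟩
    have hAx : A.adjoint ⟨x, hxdom⟩ = (starRingEnd ℂ) ζ • x :=
      LinearPMap.adjoint_apply_eq densA _ hw
    have hxdom' : x ∈ A.domain := by rw [← hA']; exact hxdom
    have hAx' : A ⟨x, hxdom'⟩ = (starRingEnd ℂ) ζ • x := by
      rw [← pmap_congr hA' x hxdom hxdom']; exact hAx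
    have h4 := hcoer ⟨x, hxdom'⟩
    rw [hAx'] at h4
    have h5 : (⟪-((starRingEnd ℂ) ζ • x), x⟫).re = -(ζ.re * ‖x‖ ^ 2) := by
      rw [inner_neg_left, inner_smul_left, starRingEnd_self_apply, inner_self_eq_norm_sq_to_K]
      simp [Complex.mul_re, ← Complex.ofReal_pow]
    rw [h5] at h4
    have h4' : C_A * ‖x‖ ^ 2 ≤ -(ζ.re * ‖x‖ ^ 2) := h4
    have h6 : ‖x‖ ^ 2 ≤ 0 := by nlinarith [mul_nonneg hζ (sq_nonneg ‖x‖)]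
    have h7 : ‖x‖ ^ 2 = 0 := le_antisymm h6 (sq_nonneg _)
    have h8 : ‖x‖ = 0 := by
      have := pow_eq_zero_iff (n := 2) (by norm_num) |>.mp h7
      exact this
    rwa [norm_eq_zero] at h8
  -- build the inverse
  have hbij : Function.Bijective g := by
    constructor
    · exact hginj
    · intro f
      have : f ∈ LinearMap.range g := by rw [hdense]; trivial
      exact LinearMap.mem_range.mp this
  let e := LinearEquiv.ofBijective g hbij
  have hRbound : ∀ f : X, ‖(A.domain.subtype ∘ₗ (e.symm : X →ₗ[ℂ] A.domain)) f‖
      ≤ C_A⁻¹ * ‖f‖ := by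
    intro f
    have h1 := hbound (e.symm f)
    have h2 : g (e.symm f) = f := e.apply_symm_apply f
    rw [h2] at h1
    have : ‖(A.domain.subtype ∘ₗ (e.symm : X →ₗ[ℂ] A.domain)) f‖ = ‖((e.symm f : A.domain) : X)‖ := rfl
    rw [this]
    rw [le_inv_mul_iff₀ hCA]
    exact h1
  let R : X →L[ℂ] X :=
    LinearMap.mkContinuous (A.domain.subtype ∘ₗ (e.symm : X →ₗ[ℂ] A.domain)) C_A⁻¹ hRbound
  have hRapp : ∀ f : X, R f = ((e.symm f : A.domain) : X) := fun f => rfl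
  refine ⟨R, ?_, ?_⟩
  · intro u
    have h1 : ζ • (u : X) - A u = g u := (hgapp u).symm
    rw [h1, hRapp]
    exact congrArg Subtype.val (e.symm_apply_apply u)
  · intro f
    have hmem : R f ∈ A.domain := by rw [hRapp]; exact (e.symm f).2
    refine ⟨hmem, ?_⟩
    have h2 : g (e.symm f) = f := e.apply_symm_apply f
    rw [hgapp] at h2
    have h3 : (⟨R f, hmem⟩ : A.domain) = e.symm f := Subtype.ext (hRapp f)
    rw [h3, hRapp]
    exact h2

set_option maxHeartbeats 2000000 in
/-- Lemma `L:Res_Half` of the paper.  `A` is self-adjoint with `(−Au,u) ≥ C_A‖u‖²`;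
`Λ` is closed, densely defined and `A`-compact; `N = ker Λ`; `Q` is the orthogonal
projection of `X` onto `N^⊥`, and `QA ⊂ AQ`; `B₂` is a bounded self-adjoint operator
with `ker B₂ = N`, `(u,B₂u) ≥ C‖u‖²` on `N^⊥`,
`Re(−Au, B₂u) ≥ C‖(−A)^{1/2}u‖² = C·(−Au,u)` on `D(A) ∩ N^⊥`, and `Im(Λu, B₂u) = 0`
on `D(Λ)` (the content of Assumption `As:La_02` via `Λ = B₁B₂`).  Then the spectrum of
`L_α = A − iαΛ` lies in the open left half-plane: `{Re ζ ≥ 0} ⊂ ρ(L_α)` for all `α ∈ ℝ`. -/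
theorem stmt_8 (A Λ : X →ₗ.[ℂ] X) (hA : IsSelfAdjoint A)
    (C_A : ℝ) (hCA : 0 < C_A)
    (hcoer : ∀ u : A.domain, C_A * ‖(u : X)‖ ^ 2 ≤ (inner ℂ (-(A u)) ((u : X)) : ℂ).re)
    (hΛdense : Dense (Λ.domain : Set X))
    (hΛclosed : IsClosed (Λ.graph : Set (X × X)))
    (hsub : A.domain ≤ Λ.domain)
    (hcpt : IsRelCompact A Λ hsub)
    (N : Submodule ℂ X)
    (hN : N = (LinearMap.ker Λ.toFun).map Λ.domain.subtype)
    (hNclosed : IsClosed (N : Set X))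
    (Q : X →L[ℂ] X)
    (hQmem : ∀ u : X, Q u ∈ Nᗮ)
    (hQid : ∀ u ∈ Nᗮ, Q u = u)
    (hQzero : ∀ u ∈ N, Q u = 0)
    (hQA : ∀ u : A.domain, ∃ h : Q (u : X) ∈ A.domain, Q (A u) = A ⟨Q (u : X), h⟩)
    (B₂ : X →L[ℂ] X) (hB₂ : IsSelfAdjoint B₂)
    (hkerB₂ : ∀ u : X, B₂ u = 0 ↔ u ∈ N)
    (C : ℝ) (hC : 0 < C)
    (hB₂pos : ∀ u ∈ Nᗮ, C * ‖u‖ ^ 2 ≤ (inner ℂ u (B₂ u) : ℂ).re)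
    (hAB₂ : ∀ u : A.domain, (u : X) ∈ Nᗮ →
      C * (inner ℂ (-(A u)) ((u : X)) : ℂ).re ≤ (inner ℂ (-(A u)) (B₂ (u : X)) : ℂ).re)
    (hΛB₂ : ∀ u : Λ.domain, (inner ℂ (Λ u) (B₂ (u : X)) : ℂ).im = 0)
    (α : ℝ) :
    ∀ ζ : ℂ, 0 ≤ ζ.re → InResolvent (pmapL A Λ hsub α) ζ := by
  intro ζ hζ
  haveI : CompleteSpace N := hNclosed.completeSpace_coe
  set c : ℂ := Complex.I * (α : ℂ) with hc
  -- the resolvent of A at ζ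
  obtain ⟨R₀, hR₀l, hR₀r⟩ := selfadj_resolvent A hA C_A hCA hcoer ζ hζ
  have hR₀mem : ∀ f : X, R₀ f ∈ A.domain := fun f => (hR₀r f).choose
  have hR₀eq : ∀ f : X, ζ • R₀ f - A ⟨R₀ f, hR₀mem f⟩ = f := fun f => (hR₀r f).choose_spec
  -- basic facts about Q and N
  have symB : ∀ x y : X, ⟪B₂ x, y⟫ = ⟪x, B₂ y⟫ := fun x y => hB₂.isSymmetric x y
  have hdecomp : ∀ x : X, x - Q x ∈ N := by
    intro x
    obtain ⟨n, hn, m, hm, rfl⟩ := N.exists_add_mem_mem_orthogonal x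
    have : Q (n + m) = m := by rw [map_add, hQzero n hn, hQid m hm, zero_add]
    rw [this, add_sub_cancel_right]
    exact hn
  have hkerQ : ∀ x : X, Q x = 0 → x ∈ N := by
    intro x hx
    have h1 := hdecomp x
    rwa [hx, sub_zero] at h1
  -- injectivity of ζ - L_α
  have hinjL : ∀ u : A.domain,
      ζ • (u : X) - (A u - c • Λ (Submodule.inclusion hsub u)) = 0 → (u : X) = 0 := by
    intro u hu
    rw [sub_eq_zero] at hu
    obtain ⟨hvdom, hQAu⟩ := hQA u
    set v : A.domain := ⟨Q (u : X), hvdom⟩ with hv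
    set w : A.domain := u - v with hw
    have hvmem : (v : X) ∈ Nᗮ := hQmem (u : X)
    have hwN : (w : X) ∈ N := by
      have : (w : X) = (u : X) - Q (u : X) := rfl
      rw [this]
      exact hdecomp _
    have hB₂w : B₂ (w : X) = 0 := (hkerB₂ _).mpr hwN
    have huvw : (u : X) = (v : X) + (w : X) := by
      have : (w : X) = (u : X) - (v : X) := rfl
      rw [this]; abel
    have hB₂u : B₂ (u : X) = B₂ (v : X) := by
      rw [huvw, map_add, hB₂w, add_zero]
    have hQv : Q (v : X) = (v : X) := hQid _ hvmem
    have hQAv : Q (A v) = A v := by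
      obtain ⟨h2, h3⟩ := hQA v
      have h4 : (⟨Q (v : X), h2⟩ : A.domain) = v := Subtype.ext hQv
      rw [h3, h4]
    have hAwN : (A w : X) ∈ N := by
      apply hkerQ
      have h1 : A w = A u - A v := A.map_sub u v
      rw [h1, map_sub, hQAu, hQAv, sub_self]
    have hB₂Aw : B₂ (A w) = 0 := (hkerB₂ _).mpr hAwN
    -- the weighted quantity
    set r : ℂ := ⟪(u : X), B₂ (u : X)⟫ with hr
    have hr_im : r.im = 0 := by
      have h1 : (starRingEnd ℂ) r = r := by
        rw [hr, inner_conj_symm, symB]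
      exact Complex.conj_eq_iff_im.mp h1
    have hr_eq : r = ⟪(v : X), B₂ (v : X)⟫ := by
      rw [hr, hB₂u, huvw, inner_add_left]
      have : ⟪(w : X), B₂ (v : X)⟫ = 0 := by
        rw [← symB, hB₂w, inner_zero_left]
      rw [this, add_zero]
    have hr_pos : C * ‖(v : X)‖ ^ 2 ≤ r.re := by
      rw [hr_eq]; exact hB₂pos _ hvmem
    -- take the inner product of the eigenvalue equation with B₂ u
    have hmain : ⟪ζ • (u : X), B₂ (u : X)⟫
        = ⟪(A u : X), B₂ (u : X)⟫ - ⟪c • Λ (Submodule.inclusion hsub u), B₂ (u : X)⟫ := by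
      rw [← inner_sub_left, ← hu]
    have hLHS : (⟪ζ • (u : X), B₂ (u : X)⟫).re = ζ.re * r.re := by
      rw [inner_smul_left, ← hr, Complex.mul_re, Complex.conj_re, Complex.conj_im, hr_im]
      ring
    have hz_im : (⟪Λ (Submodule.inclusion hsub u), B₂ (u : X)⟫).im = 0 := by
      have h1 := hΛB₂ (Submodule.inclusion hsub u)
      have h2 : ((Submodule.inclusion hsub u : Λ.domain) : X) = (u : X) :=
        Submodule.coe_inclusion _ _
      rwa [h2] at h1
    have hterm2 : (⟪c • Λ (Submodule.inclusion hsub u), B₂ (u : X)⟫).re = 0 := by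
      rw [inner_smul_left, Complex.mul_re]
      have hcre : ((starRingEnd ℂ) c).re = 0 := by
        rw [hc]; simp
      have hcim : ((starRingEnd ℂ) c).im = -α := by
        rw [hc]; simp
      rw [hcre, hcim, hz_im]
      ring
    have hAv_eq : ⟪(A u : X), B₂ (u : X)⟫ = ⟪(A v : X), B₂ (v : X)⟫ := by
      have h1 : A u = A v + A w := by
        rw [hw, A.map_sub]; abel
      rw [h1, hB₂u, inner_add_left]
      have h2 : ⟪(A w : X), B₂ (v : X)⟫ = 0 := by
        rw [← symB, hB₂Aw, inner_zero_left]
      rw [h2, add_zero]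
    have heq1 : ζ.re * r.re = (⟪(A v : X), B₂ (v : X)⟫).re := by
      have := congrArg Complex.re hmain
      rw [hLHS, Complex.sub_re, hterm2, hAv_eq] at this
      simpa using this
    have hAvineq : (⟪(A v : X), B₂ (v : X)⟫).re ≤ -(C * (⟪-(A v : X), (v : X)⟫).re) := by
      have h1 := hAB₂ v hvmem
      rw [inner_neg_left, Complex.neg_re] at h1 ⊢
      rw [inner_neg_left, Complex.neg_re] at h1
      linarith
    have hcoerv := hcoer v
    have hrre_nonneg : 0 ≤ r.re := le_trans (by positivity) hr_pos
    have hv0 : ‖(v : X)‖ ^ 2 ≤ 0 := by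
      have h1 : 0 ≤ ζ.re * r.re := mul_nonneg hζ hrre_nonneg
      have h2 : (⟪-(A v : X), (v : X)⟫).re ≥ C_A * ‖(v : X)‖ ^ 2 := hcoerv
      nlinarith [mul_le_mul_of_nonneg_left h2 hC.le, mul_pos hC hCA, heq1, hAvineq, h1]
    have hQu0 : Q (u : X) = 0 := by
      have h1 : ‖(v : X)‖ = 0 := by nlinarith [norm_nonneg (v : X), sq_nonneg ‖(v : X)‖]
      have h2 : (v : X) = 0 := norm_eq_zero.mp h1
      exact h2
    have huN : (u : X) ∈ N := hkerQ _ hQu0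
    -- now Λ u = 0 and the equation reduces to A u = ζ u
    have hΛu : Λ (Submodule.inclusion hsub u) = 0 := by
      rw [hN] at huN
      obtain ⟨w', hw'ker, hw'eq⟩ := huN
      have h1 : (Submodule.inclusion hsub u : Λ.domain) = w' := by
        apply Subtype.ext
        rw [Submodule.coe_inclusion]
        exact hw'eq.symm
      rw [h1]
      exact hw'ker
    rw [hΛu, smul_zero, sub_zero] at hu
    have hfinal := congrArg (fun z : X => (⟪z, (u : X)⟫).re) hu
    have hL : (⟪ζ • (u : X), (u : X)⟫).re = ζ.re * ‖(u : X)‖ ^ 2 := by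
      rw [inner_smul_left, inner_self_eq_norm_sq_to_K]
      simp [Complex.mul_re, ← Complex.ofReal_pow]
    have hR : (⟪(A u : X), (u : X)⟫).re ≤ -(C_A * ‖(u : X)‖ ^ 2) := by
      have h1 := hcoer u
      rw [inner_neg_left, Complex.neg_re] at h1
      linarith
    rw [hL] at hfinal
    have hnn : 0 ≤ ζ.re * ‖(u : X)‖ ^ 2 := mul_nonneg hζ (sq_nonneg _)
    have : ‖(u : X)‖ ^ 2 ≤ 0 := by nlinarith
    have h2 : ‖(u : X)‖ = 0 := by nlinarith [norm_nonneg (u : X), sq_nonneg ‖(u : X)‖]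
    exact norm_eq_zero.mp h2
  -- the compact perturbation K = c • Λ ∘ R₀
  set umap : X →ₗ[ℂ] A.domain :=
    LinearMap.codRestrict A.domain (R₀ : X →ₗ[ℂ] X) hR₀mem with humap
  set Klin : X →ₗ[ℂ] X :=
    c • (Λ.toFun ∘ₗ ((Submodule.inclusion hsub : A.domain →ₗ[ℂ] Λ.domain) ∘ₗ umap)) with hKlin
  have hKlinapp : ∀ f : X, Klin f = c • Λ (Submodule.inclusion hsub (umap f)) := fun f => rfl
  have humapcoe : ∀ f : X, ((umap f : A.domain) : X) = R₀ f := fun f => rfl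
  -- graph norm bound for umap
  have hgraphbound : ∀ f : X, ‖(umap f : X)‖ + ‖A (umap f)‖ ≤ (‖R₀‖ + ‖ζ‖ * ‖R₀‖ + 1) * ‖f‖ := by
    intro f
    have h1 : ‖(umap f : X)‖ ≤ ‖R₀‖ * ‖f‖ := by
      rw [humapcoe]; exact R₀.le_opNorm f
    have h2 : A (umap f) = ζ • R₀ f - f := by
      have h3 := hR₀eq f
      have h4 : (umap f : A.domain) = ⟨R₀ f, hR₀mem f⟩ := Subtype.ext (humapcoe f)
      rw [h4]
      rw [eq_sub_iff_add_eq, ← eq_sub_iff_add_eq']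
      exact h3.symm ▸ rfl
    have h5 : ‖A (umap f)‖ ≤ ‖ζ‖ * (‖R₀‖ * ‖f‖) + ‖f‖ := by
      rw [h2]
      calc ‖ζ • R₀ f - f‖ ≤ ‖ζ • R₀ f‖ + ‖f‖ := norm_sub_le _ _
        _ = ‖ζ‖ * ‖R₀ f‖ + ‖f‖ := by rw [norm_smul]
        _ ≤ ‖ζ‖ * (‖R₀‖ * ‖f‖) + ‖f‖ := by
            have := R₀.le_opNorm f
            nlinarith [norm_nonneg ζ]
    nlinarith [norm_nonneg f]
  -- sequential compactness of Klin on bounded sequences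
  have hKcpt : ∀ f : ℕ → X, (∃ M : ℝ, ∀ n, ‖f n‖ ≤ M) →
      ∃ φ : ℕ → ℕ, StrictMono φ ∧ ∃ l : X,
        Filter.Tendsto (fun n => Klin (f (φ n))) Filter.atTop (nhds l) := by
    intro f hfb
    obtain ⟨M, hM⟩ := hfb
    obtain ⟨φ, hφ, l, hl⟩ := hcpt (fun n => umap (f n)) ⟨(‖R₀‖ + ‖ζ‖ * ‖R₀‖ + 1) * M, by
      intro k
      calc ‖(umap (f k) : X)‖ + ‖A (umap (f k))‖ ≤ (‖R₀‖ + ‖ζ‖ * ‖R₀‖ + 1) * ‖f k‖ :=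
            hgraphbound (f k)
        _ ≤ (‖R₀‖ + ‖ζ‖ * ‖R₀‖ + 1) * M := by
            have h0 : (0:ℝ) ≤ ‖R₀‖ + ‖ζ‖ * ‖R₀‖ + 1 := by positivity
            exact mul_le_mul_of_nonneg_left (hM k) h0⟩
    refine ⟨φ, hφ, c • l, ?_⟩
    have h1 : ∀ n, Klin (f (φ n)) = c • Λ ⟨((umap (f (φ n)) : A.domain) : X),
        hsub (umap (f (φ n))).2⟩ := fun n => rfl
    simp only [h1]
    exact hl.const_smul c
  -- continuity of Klin
  have hKbound : ∃ M : ℝ, ∀ f : X, ‖Klin f‖ ≤ M * ‖f‖ := by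
    by_contra hcon
    push_neg at hcon
    have hex : ∀ n : ℕ, ∃ z : X, ‖z‖ = 1 ∧ (n : ℝ) < ‖Klin z‖ := by
      intro n
      obtain ⟨f, hf⟩ := hcon n
      have hf0 : f ≠ 0 := by
        rintro rfl
        simp at hf
      refine ⟨(‖f‖⁻¹ : ℂ) • f, ?_, ?_⟩
      · rw [norm_smul]; simp [inv_mul_cancel₀ (norm_ne_zero_iff.mpr hf0)]
      · rw [map_smul, norm_smul]
        simp only [norm_inv, Complex.norm_real, norm_norm]
        rw [lt_inv_mul_iff₀ (norm_pos_iff.mpr hf0)]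
        calc ‖f‖ * (n : ℝ) = (n : ℝ) * ‖f‖ := by ring
          _ < ‖Klin f‖ := hf
    choose z hz1 hz2 using hex
    obtain ⟨φ, hφ, l, hl⟩ := hKcpt z ⟨1, fun n => (hz1 n).le⟩
    have hnorml : Filter.Tendsto (fun n => ‖Klin (z (φ n))‖) Filter.atTop (nhds ‖l‖) :=
      (continuous_norm.tendsto _).comp hl
    have hev : ∀ᶠ n in Filter.atTop, ‖Klin (z (φ n))‖ < ‖l‖ + 1 :=
      hnorml.eventually_lt_const (by linarith)
    obtain ⟨n, hn1, hn2⟩ := (hev.and (Filter.eventually_ge_atTop ⌈‖l‖ + 1⌉₊)).exists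
    have h3 : (n : ℝ) ≥ ‖l‖ + 1 := le_trans (Nat.le_ceil _) (by exact_mod_cast hn2)
    have h4 : (φ n : ℝ) ≥ (n : ℝ) := by exact_mod_cast hφ.le_apply
    have h5 := hz2 (φ n)
    linarith
  obtain ⟨M, hMb⟩ := hKbound
  let K : X →L[ℂ] X := Klin.mkContinuous M hMb
  have hKapp : ∀ f : X, K f = Klin f := fun f => rfl
  -- injectivity of 1 + K
  have hinjK : ∀ f : X, f + K f = 0 → f = 0 := by
    intro f hf
    set u : A.domain := ⟨R₀ f, hR₀mem f⟩ with hudef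
    have h1 : ζ • (u : X) - A u = f := hR₀eq f
    have h2 : K f = c • Λ (Submodule.inclusion hsub u) := rfl
    have h3 : ζ • (u : X) - (A u - c • Λ (Submodule.inclusion hsub u)) = 0 := by
      have : ζ • (u : X) - (A u - c • Λ (Submodule.inclusion hsub u))
          = (ζ • (u : X) - A u) + c • Λ (Submodule.inclusion hsub u) := by abel
      rw [this, h1, ← h2]
      exact hf
    have h4 : (u : X) = 0 := hinjL u h3
    have h5 : u = 0 := Subtype.ext h4
    rw [← h1, h5]
    simp
  obtain ⟨S, hSl, hSr⟩ := fredholm K hKcpt hinjK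
  -- assemble the resolvent
  refine ⟨R₀.comp S, ?_, ?_⟩
  · intro u
    -- here u : (pmapL A Λ hsub α).domain = A.domain
    have hTu : (pmapL A Λ hsub α) u = A u - c • Λ (Submodule.inclusion hsub u) := rfl
    set fu : X := ζ • (u : X) - A u with hfu
    have h2 : K fu = c • Λ (Submodule.inclusion hsub u) := by
      rw [hKapp, hKlinapp]
      exact congrArg (fun z => c • z) (congrArg Λ.toFun
        (congrArg (Submodule.inclusion hsub) (Subtype.ext (hR₀l u))))
    have h3 : ζ • (u : X) - (pmapL A Λ hsub α) u = fu + K fu := by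
      rw [hTu, h2, hfu]; abel
    rw [ContinuousLinearMap.comp_apply, h3, hSl fu, hfu]
    exact hR₀l u
  · intro f
    have hmem : (R₀.comp S) f ∈ (pmapL A Λ hsub α).domain := hR₀mem (S f)
    refine ⟨hmem, ?_⟩
    have hTu : (pmapL A Λ hsub α) ⟨(R₀.comp S) f, hmem⟩
        = A ⟨R₀ (S f), hR₀mem (S f)⟩
          - c • Λ (Submodule.inclusion hsub (⟨R₀ (S f), hR₀mem (S f)⟩ : A.domain)) := rfl
    have h2 : K (S f) = c • Λ (Submodule.inclusion hsub (⟨R₀ (S f), hR₀mem (S f)⟩ : A.domain)) :=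
      rfl
    have h3 : ζ • (R₀.comp S) f - (pmapL A Λ hsub α) ⟨(R₀.comp S) f, hmem⟩
        = (ζ • R₀ (S f) - A ⟨R₀ (S f), hR₀mem (S f)⟩) + K (S f) := by
      rw [hTu, h2]
      simp only [ContinuousLinearMap.comp_apply]
      abel
    rw [h3, hR₀eq (S f)]
    exact hSr f
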